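/- For all positive integers n and k, the binomial coefficient satisfies C(n+k, n) < ((n+k)/(2πnk))^{1/2} · [f(k/n)]^n, where f(x) = (1+x)^{1+x}/x^x. -/

import Mathlib

open Real Topology

/-- `f x = (1+x)^(1+x) / x^x` (real powers). -/
noncomputable def f (x : ℝ) : ℝ := (1 + x) ^ (1 + x) / x ^ x

lemma stirling_strict_step (m : ℕ) :
    Stirling.stirlingSeq (m + 2) < Stirling.stirlingSeq (m + 1) := by
  have hpos := Stirling.stirlingSeq'_pos
  have hlog : 0 < log (Stirling.stirlingSeq (m + 1)) - log (Stirling.stirlingSeq (m + 2)) := by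
    have h := Stirling.log_stirlingSeq_diff_hasSum m
    have h0 := le_hasSum h 0 (fun j _ => by positivity)
    refine lt_of_lt_of_le ?_ h0
    positivity
  exact (Real.log_lt_log_iff (hpos (m + 1)) (hpos m)).mp (sub_pos.mp hlog)

lemma sqrt_pi_le_stirling (m : ℕ) : Real.sqrt π ≤ Stirling.stirlingSeq (m + 1) := by
  have htend : Filter.Tendsto (Stirling.stirlingSeq ∘ Nat.succ) Filter.atTop (𝓝 (Real.sqrt π)) :=
    Stirling.tendsto_stirlingSeq_sqrt_pi.comp (Filter.tendsto_add_atTop_nat 1)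
  exact Stirling.stirlingSeq'_antitone.le_of_tendsto htend m

lemma sqrt_pi_lt_stirling (m : ℕ) (hm : 0 < m) : Real.sqrt π < Stirling.stirlingSeq m := by
  obtain ⟨m, rfl⟩ : ∃ m', m = m' + 1 := ⟨m - 1, by omega⟩
  exact lt_of_le_of_lt (sqrt_pi_le_stirling (m + 1)) (stirling_strict_step m)

lemma stirling_le_stirling {a b : ℕ} (ha : 0 < a) (hab : a ≤ b) :
    Stirling.stirlingSeq b ≤ Stirling.stirlingSeq a := by
  obtain ⟨a, rfl⟩ : ∃ a', a = a' + 1 := ⟨a - 1, by omega⟩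
  obtain ⟨b, rfl⟩ : ∃ b', b = b' + 1 := ⟨b - 1, by omega⟩
  exact Stirling.stirlingSeq'_antitone (by omega : a ≤ b)

lemma fact_eq_stirling (m : ℕ) (hm : 0 < m) :
    (m.factorial : ℝ) = Stirling.stirlingSeq m * (Real.sqrt (2 * m) * ((m : ℝ) / exp 1) ^ m) := by
  have hm' : (0 : ℝ) < m := Nat.cast_pos.mpr hm
  have hd : (0 : ℝ) < Real.sqrt (2 * m) * ((m : ℝ) / exp 1) ^ m := by positivity
  rw [Stirling.stirlingSeq, div_mul_cancel₀ _ hd.ne']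

/-- For all positive integers `n` and `k`,
`C(n+k, n) < ((n+k)/(2πnk))^(1/2) * (f (k/n))^n`. -/
theorem binom_lt_stirling_bound (n k : ℕ) (hn : 0 < n) (hk : 0 < k) :
    ((n + k).choose n : ℝ) <
      (((n : ℝ) + (k : ℝ)) / (2 * π * n * k)) ^ ((1 : ℝ) / 2) *
        (f ((k : ℝ) / (n : ℝ))) ^ n := by
  have hn' : (0 : ℝ) < n := Nat.cast_pos.mpr hn
  have hk' : (0 : ℝ) < k := Nat.cast_pos.mpr hk
  have hs' : (0 : ℝ) < (n : ℝ) + k := by positivity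
  have hπ : (0 : ℝ) < Real.sqrt π := Real.sqrt_pos.mpr pi_pos
  set Sn := Stirling.stirlingSeq n with hSndef
  set Sk := Stirling.stirlingSeq k with hSkdef
  set Ss := Stirling.stirlingSeq (n + k) with hSsdef
  have hSn : Real.sqrt π < Sn := sqrt_pi_lt_stirling n hn
  have hSk : Real.sqrt π < Sk := sqrt_pi_lt_stirling k hk
  have hSs : Real.sqrt π < Ss := sqrt_pi_lt_stirling (n + k) (by omega)
  have hSs0 : 0 < Ss := lt_trans hπ hSs
  have hSn0 : 0 < Sn := lt_trans hπ hSn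
  have hSk0 : 0 < Sk := lt_trans hπ hSk
  -- key Stirling inequality
  have key : Real.sqrt π * Ss < Sn * Sk := by
    have h1 : Ss ≤ Sn := stirling_le_stirling hn (Nat.le_add_right n k)
    calc Real.sqrt π * Ss < Sk * Ss := by gcongr
      _ ≤ Sk * Sn := by gcongr
      _ = Sn * Sk := mul_comm _ _
  -- f term
  have h1x : 1 + (k : ℝ) / n = ((n : ℝ) + k) / n := by field_simp
  have hf : f ((k : ℝ) / n) ^ n =
      ((((n : ℝ) + k) / n) ^ (n + k)) / (((k : ℝ) / n) ^ k) := by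
    rw [f, h1x, div_pow,
      ← Real.rpow_natCast (((((n : ℝ) + k) / n)) ^ ((((n : ℝ) + k) / n))) n,
      ← Real.rpow_natCast ((((k : ℝ) / n)) ^ (((k : ℝ) / n))) n,
      ← Real.rpow_mul (by positivity), ← Real.rpow_mul (by positivity),
      div_mul_cancel₀ _ hn'.ne', div_mul_cancel₀ _ hn'.ne',
      show ((n : ℝ) + k) = ((n + k : ℕ) : ℝ) by push_cast; ring,
      Real.rpow_natCast, Real.rpow_natCast]
  have hf2 : f ((k : ℝ) / n) ^ n = ((n : ℝ) + k) ^ (n + k) / ((n : ℝ) ^ n * (k : ℝ) ^ k) := by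
    rw [hf, div_pow, div_pow]
    field_simp
    ring
  -- sqrt coefficient
  have hcoef : (((n : ℝ) + k) / (2 * π * n * k)) ^ ((1 : ℝ) / 2) =
      Real.sqrt (2 * ((n : ℝ) + k)) / (Real.sqrt π * Real.sqrt (2 * n) * Real.sqrt (2 * k)) := by
    rw [← Real.sqrt_eq_rpow]
    rw [← Real.sqrt_mul pi_pos.le, ← Real.sqrt_mul (by positivity),
      ← Real.sqrt_div (by positivity)]
    congr 1
    field_simp
  -- choose in terms of factorials
  have hC : ((n + k).choose n : ℝ) = ((n + k).factorial : ℝ) / ((n.factorial : ℝ) * (k.factorial : ℝ)) := by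
    rw [eq_div_iff (by positivity)]
    norm_cast
    rw [← mul_assoc, mul_right_comm, Nat.add_comm n k, Nat.add_choose_mul_factorial_mul_factorial]
  have hC0 : (0 : ℝ) < ((n + k).choose n : ℝ) := by
    exact_mod_cast Nat.choose_pos (Nat.le_add_right n k)
  -- the main equality
  have heq : (((n : ℝ) + k) / (2 * π * n * k)) ^ ((1 : ℝ) / 2) * (f ((k : ℝ) / n)) ^ n =
      (Sn * Sk / (Real.sqrt π * Ss)) * ((n + k).choose n : ℝ) := by
    rw [hcoef, hf2, hC, fact_eq_stirling n hn, fact_eq_stirling k hk,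
      fact_eq_stirling (n + k) (by omega), ← hSndef, ← hSkdef]
    have hcast : ((n + k : ℕ) : ℝ) = (n : ℝ) + k := by push_cast; ring
    rw [hcast, ← hSsdef]
    have e1 : (0:ℝ) < exp 1 := exp_pos 1
    have h2n : (0:ℝ) < Real.sqrt (2 * n) := by positivity
    have h2k : (0:ℝ) < Real.sqrt (2 * k) := by positivity
    have h2s : (0:ℝ) < Real.sqrt (2 * ((n:ℝ) + k)) := by positivity
    rw [div_pow, div_pow, div_pow]
    field_simp
    ring
  rw [heq]
  have ht : 1 < Sn * Sk / (Real.sqrt π * Ss) := by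
    rw [lt_div_iff₀ (by positivity)]
    linarith
  calc ((n + k).choose n : ℝ) = 1 * ((n + k).choose n : ℝ) := (one_mul _).symm
    _ < (Sn * Sk / (Real.sqrt π * Ss)) * ((n + k).choose n : ℝ) := by gcongr
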